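/- Let f, h : ℝ → ℝ be continuous functions, let b > 0, and suppose S(c) := 1 − ∫_0^c f(u)du > 0 for all c ∈ [0, b]. Set H(c) = ∫_0^c h(u)f(u)du. Then for every c ∈ [0, b]: H(c)/S(c) = ∫_0^c (h(u) + H(u)/S(u)) · (f(u)/S(u)) du. (This is the relation Θ*(c) = H*(c)/S(c) where Θ*(c) = ∫_0^c η*(u)λ(u)du with hazard λ = f/S and η* = h* + H*/S, from the paper's lemma relating the two canonical-gradient integral equations.) -/

import Mathlib

open MeasureTheory

/-- For continuous `f, h : ℝ → ℝ`, `b > 0`, with `S(c) = 1 − ∫_0^c f > 0` on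
`[0,b]` and `H(c) = ∫_0^c h f`, for every `c ∈ [0,b]`:
`H(c)/S(c) = ∫_0^c (h(u) + H(u)/S(u)) · (f(u)/S(u)) du`. -/
theorem stmt_6
    (f h : ℝ → ℝ) (hf : Continuous f) (hh : Continuous h)
    (b : ℝ) (hb : 0 < b)
    (S : ℝ → ℝ) (hS : ∀ c, S c = 1 - ∫ u in (0 : ℝ)..c, f u)
    (hSpos : ∀ c ∈ Set.Icc (0 : ℝ) b, 0 < S c)
    (H : ℝ → ℝ) (hH : ∀ c, H c = ∫ u in (0 : ℝ)..c, h u * f u) :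
    ∀ c ∈ Set.Icc (0 : ℝ) b,
      H c / S c = ∫ u in (0 : ℝ)..c, (h u + H u / S u) * (f u / S u) := by
  intro c hc
  obtain ⟨hc0, hcb⟩ := hc
  have hSfun : S = fun x => 1 - ∫ u in (0:ℝ)..x, f u := funext hS
  have hHfun : H = fun x => ∫ u in (0:ℝ)..x, h u * f u := funext hH
  have hScont : Continuous S := by
    rw [hSfun]
    exact continuous_const.sub (intervalIntegral.continuous_primitive
      (fun a b => hf.intervalIntegrable a b) 0)
  have hHcont : Continuous H := by
    rw [hHfun]
    exact intervalIntegral.continuous_primitive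
      (fun a b => ((hh.mul hf).intervalIntegrable a b)) 0
  have hsub : Set.uIcc (0:ℝ) c ⊆ Set.Icc 0 b := by
    rw [Set.uIcc_of_le hc0]
    exact Set.Icc_subset_Icc le_rfl hcb
  have hderiv : ∀ u ∈ Set.uIcc (0:ℝ) c,
      HasDerivAt (fun x => H x / S x) ((h u + H u / S u) * (f u / S u)) u := by
    intro u hu
    have hSu : S u ≠ 0 := (hSpos u (hsub hu)).ne'
    have hdH : HasDerivAt H (h u * f u) u := by
      rw [hHfun]
      exact intervalIntegral.integral_hasDerivAt_right
        ((hh.mul hf).intervalIntegrable 0 u)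
        ((hh.mul hf).stronglyMeasurableAtFilter _ _) (hh.mul hf).continuousAt
    have hdS : HasDerivAt S (-(f u)) u := by
      rw [hSfun]
      have : HasDerivAt (fun x => ∫ v in (0:ℝ)..x, f v) (f u) u :=
        intervalIntegral.integral_hasDerivAt_right (hf.intervalIntegrable 0 u)
          (hf.stronglyMeasurableAtFilter _ _) hf.continuousAt
      have h2 : HasDerivAt (fun x => 1 - ∫ v in (0:ℝ)..x, f v) (0 - f u) u :=
        (hasDerivAt_const u (1:ℝ)).sub this
      simpa only [zero_sub] using h2
    have : HasDerivAt (fun x => H x / S x) ((h u * f u * S u - H u * -f u) / S u ^ 2) u :=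
      hdH.div hdS hSu
    convert this using 1
    field_simp
    ring
  have hint : IntervalIntegrable (fun u => (h u + H u / S u) * (f u / S u))
      MeasureTheory.volume 0 c := by
    apply ContinuousOn.intervalIntegrable
    apply ContinuousOn.mul
    · exact (hh.continuousOn.add (hHcont.continuousOn.div hScont.continuousOn
        (fun u hu => (hSpos u (hsub hu)).ne')))
    · exact hf.continuousOn.div hScont.continuousOn
        (fun u hu => (hSpos u (hsub hu)).ne')
  have key := intervalIntegral.integral_eq_sub_of_hasDerivAt hderiv hint
  rw [key]
  have h0 : H 0 = 0 := by simp [hH]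
  simp [h0]
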